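/- If a sequence (T_j) of tournaments with n_j = |V(T_j)| → ∞ satisfies (1/n_j²) · Σ_{(u,v) arc of T_j} |C(u,v)/(n_j − 2) − 1/4| → 0, then c_3(T_j)/binomial(n_j,3) → 1/4 as j → ∞, where c_3(T) is the number of 3-element subsets of V(T) inducing a cyclic triangle. -/

import Mathlib

/-- A tournament on `n` vertices: an irreflexive relation such that for every
pair of distinct vertices exactly one direction holds. -/
structure Tournament (n : ℕ) where
  rel : Fin n → Fin n → Bool
  irrefl : ∀ v, rel v v = false
  total : ∀ u v, u ≠ v → rel u v = !rel v u

/-- The transitive tournament `Tr_k`. -/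
def Tr (k : ℕ) : Tournament k where
  rel i j := decide (i < j)
  irrefl v := by simp
  total u v h := by
    rcases h.lt_or_gt with h' | h'
    · simp [h', h'.le]
    · simp [h', h'.le]

/-- The cyclic triangle. -/
def C3 : Tournament 3 where
  rel := ![![false, true, false], ![false, false, true], ![true, false, false]]
  irrefl := by decide
  total := by decide

/-- `W₄`: the non-transitive tournament on 4 vertices with a "winner". -/
def W4 : Tournament 4 where
  rel := ![![false, true, true, true], ![false, false, true, false],
           ![false, false, false, true], ![false, true, false, false]]
  irrefl := by decide
  total := by decide

/-- `L₄`: the non-transitive tournament on 4 vertices with a "loser". -/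
def L4 : Tournament 4 where
  rel := ![![false, true, false, true], ![false, false, true, true],
           ![true, false, false, true], ![false, false, false, false]]
  irrefl := by decide
  total := by decide

/-- `R₄`: the tournament on 4 vertices with out-degree sequence (1,1,2,2). -/
def R4 : Tournament 4 where
  rel := ![![false, true, true, false], ![false, false, true, true],
           ![false, false, false, true], ![true, false, false, false]]
  irrefl := by decide
  total := by decide

/-- Two tournaments on the same number of vertices are isomorphic if some
permutation of the vertices carries one arc relation to the other. -/
def Isomorphic {k : ℕ} (S T : Tournament k) : Prop :=
  ∃ e : Equiv.Perm (Fin k), ∀ i j, S.rel i j = T.rel (e i) (e j)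

/-- The subtournament of `T` induced on the subset `A` is isomorphic to `S`. -/
def IsoOn {k n : ℕ} (S : Tournament k) (T : Tournament n) (A : Finset (Fin n)) : Prop :=
  ∃ f : Fin k → Fin n, Function.Injective f ∧ Finset.univ.image f = A ∧
    ∀ i j, S.rel i j = T.rel (f i) (f j)

open scoped Classical in
/-- The number of `k`-element subsets of the vertex set of `T` whose induced
subtournament is isomorphic to `S` (where `S` has `k` vertices). -/
noncomputable def copyCount {k n : ℕ} (S : Tournament k) (T : Tournament n) : ℕ :=
  ((Finset.powersetCard k (Finset.univ : Finset (Fin n))).filter (IsoOn S T)).card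

/-- The (unlabelled) density `p(S, T)`. -/
noncomputable def density {k n : ℕ} (S : Tournament k) (T : Tournament n) : ℝ :=
  (copyCount S T : ℝ) / (n.choose k : ℝ)

/-- The number of automorphisms of a tournament. -/
def autCount {k : ℕ} (S : Tournament k) : ℕ :=
  (Finset.univ.filter
    (fun e : Equiv.Perm (Fin k) => ∀ i j, S.rel i j = S.rel (e i) (e j))).card

/-- A sequence of tournaments with growing vertex sets is quasi-random if every
fixed tournament `S` on `k` vertices appears with density tending to
`k! / (|Aut S| * 2^(k(k-1)/2))`. -/
def QuasiRandom {nn : ℕ → ℕ} (T : ∀ j, Tournament (nn j)) : Prop :=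
  ∀ (k : ℕ) (S : Tournament k),
    Filter.Tendsto (fun j => density S (T j)) Filter.atTop
      (nhds ((k.factorial : ℝ) / ((autCount S : ℝ) * 2 ^ (k * (k - 1) / 2))))

/-- `D(u,v) = #{w : u→w ∧ w→v}`. -/
def Dcount {n : ℕ} (T : Tournament n) (u v : Fin n) : ℕ :=
  (Finset.univ.filter (fun w => T.rel u w ∧ T.rel w v)).card

/-- `C(u,v) = #{w : v→w ∧ w→u}`. -/
def Ccount {n : ℕ} (T : Tournament n) (u v : Fin n) : ℕ :=
  (Finset.univ.filter (fun w => T.rel v w ∧ T.rel w u)).card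

/-- `I(u,v) = #{w : w→u ∧ w→v}`. -/
def Icount {n : ℕ} (T : Tournament n) (u v : Fin n) : ℕ :=
  (Finset.univ.filter (fun w => T.rel w u ∧ T.rel w v)).card

/-- `O(u,v) = #{w : u→w ∧ v→w}`. -/
def Ocount {n : ℕ} (T : Tournament n) (u v : Fin n) : ℕ :=
  (Finset.univ.filter (fun w => T.rel u w ∧ T.rel v w)).card

/-- The subset `A` induces a transitive subtournament of `T`. -/
def IsTransOn {n : ℕ} (T : Tournament n) (A : Finset (Fin n)) : Prop :=
  ∀ u ∈ A, ∀ v ∈ A, ∀ w ∈ A, T.rel u v → T.rel v w → T.rel u w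

open scoped Classical in
/-- `tr_m(T)`: the number of `m`-element subsets of the vertex set of `T`
inducing a transitive subtournament. -/
noncomputable def trCount (m : ℕ) {n : ℕ} (T : Tournament n) : ℕ :=
  ((Finset.powersetCard m (Finset.univ : Finset (Fin n))).filter (IsTransOn T)).card

/-- The subtournament of `T` induced on a subset `A` of its vertices. -/
noncomputable def induce {n : ℕ} (T : Tournament n) (A : Finset (Fin n)) :
    Tournament A.card where
  rel i j := T.rel (A.orderIsoOfFin rfl i) (A.orderIsoOfFin rfl j)
  irrefl i := T.irrefl _
  total i j h := T.total _ _ (fun hc => h ((A.orderIsoOfFin rfl).injective (Subtype.ext hc)))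

/-- The out-neighbourhood `N⁺(u)` of a vertex. -/
def outSet {n : ℕ} (T : Tournament n) (u : Fin n) : Finset (Fin n) :=
  Finset.univ.filter (fun w => T.rel u w)

/-- The out-degree of a vertex. -/
def outDeg {n : ℕ} (T : Tournament n) (v : Fin n) : ℕ :=
  (Finset.univ.filter (fun w => T.rel v w)).card

/-- The multiset of out-degrees of a tournament. -/
def outDegs {n : ℕ} (T : Tournament n) : Multiset ℕ :=
  Finset.univ.val.map (outDeg T)

/-- The arc relation of `T` is transitive. -/
def IsTransitiveT {k : ℕ} (S : Tournament k) : Prop :=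
  ∀ u v w, S.rel u v → S.rel v w → S.rel u w

section Aux

open Finset

variable {n : ℕ}

lemma rel_ne (T : Tournament n) {u v : Fin n} (h : T.rel u v = true) : u ≠ v := by
  rintro rfl; rw [T.irrefl u] at h; exact Bool.false_ne_true h

lemma rel_rev (T : Tournament n) {u v : Fin n} (h : T.rel u v = true) :
    T.rel v u = false := by
  rw [T.total v u (rel_ne T h).symm, h]; rfl

lemma two_mul_arcs (T : Tournament n) :
    2 * (∑ u, ∑ v, if T.rel u v then 1 else 0) = n * (n - 1) := by
  have key : ∀ u v : Fin n,
      ((if T.rel u v then 1 else 0) + (if T.rel v u then 1 else 0)) =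
        if u = v then 0 else 1 := by
    intro u v
    by_cases h : u = v
    · subst h; simp [T.irrefl]
    · have htot := T.total u v h
      cases hvu : T.rel v u <;> simp_all
  have hswap : (∑ u, ∑ v, if T.rel u v then 1 else 0)
      = (∑ u : Fin n, ∑ v : Fin n, if T.rel v u then 1 else 0) := by
    rw [Finset.sum_comm]
  have hsum : (∑ u : Fin n, ∑ v : Fin n, if u = v then 0 else 1) = n * (n - 1) := by
    have h1 : ∀ u : Fin n, (∑ v : Fin n, if u = v then 0 else 1) = n - 1 := by
      intro u
      have h2 : (∑ v : Fin n, ((if u = v then 0 else 1) + (if u = v then 1 else 0))) = n := by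
        rw [show (fun v : Fin n => (if u = v then 0 else 1) + (if u = v then 1 else 0))
            = fun _ => 1 from funext fun v => by split <;> simp]
        simp
      have h3 : (∑ v : Fin n, if u = v then 1 else 0) = 1 := by
        simp [Finset.sum_ite_eq]
      rw [Finset.sum_add_distrib, h3] at h2
      omega
    rw [Finset.sum_congr rfl fun u _ => h1 u]
    simp [mul_comm]
  calc 2 * (∑ u, ∑ v, if T.rel u v then 1 else 0)
      = (∑ u, ∑ v, if T.rel u v then 1 else 0)
        + (∑ u : Fin n, ∑ v : Fin n, if T.rel v u then 1 else 0) := by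
        rw [← hswap]; ring
    _ = (∑ u : Fin n, ∑ v : Fin n, if u = v then 0 else 1) := by
        rw [← Finset.sum_add_distrib]
        refine Finset.sum_congr rfl fun u _ => ?_
        rw [← Finset.sum_add_distrib]
        exact Finset.sum_congr rfl fun v _ => key u v
    _ = n * (n - 1) := hsum

/-- The set of cyclically ordered triples. -/
def cycSet (T : Tournament n) : Finset (Fin n × Fin n × Fin n) :=
  Finset.univ.filter
    (fun t => T.rel t.1 t.2.1 ∧ T.rel t.2.1 t.2.2 ∧ T.rel t.2.2 t.1)

lemma sum_C_eq (T : Tournament n) :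
    (∑ u, ∑ v, if T.rel u v then Ccount T u v else 0) = (cycSet T).card := by
  classical
  rw [cycSet, Finset.card_filter, Fintype.sum_prod_type]
  refine Finset.sum_congr rfl fun u _ => ?_
  rw [Fintype.sum_prod_type]
  refine Finset.sum_congr rfl fun v _ => ?_
  by_cases h : T.rel u v = true
  · rw [if_pos h, Ccount, Finset.card_filter]
    exact Finset.sum_congr rfl fun w _ => by simp [h]
  · rw [if_neg h]
    exact (Finset.sum_eq_zero fun w _ => by simp [h]).symm

lemma card_cycSet (T : Tournament n) : (cycSet T).card = 3 * copyCount C3 T := by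
  classical
  have hC301 : C3.rel 0 1 = true := by decide
  have hC312 : C3.rel 1 2 = true := by decide
  have hC320 : C3.rel 2 0 = true := by decide
  rw [copyCount,
    Finset.card_eq_sum_card_fiberwise
      (f := fun t : Fin n × Fin n × Fin n => ({t.1, t.2.1, t.2.2} : Finset (Fin n)))
      (t := (Finset.powersetCard 3 (Finset.univ : Finset (Fin n))).filter (IsoOn C3 T))
      ?_]
  · have hfib : ∀ A ∈ (Finset.powersetCard 3 (Finset.univ : Finset (Fin n))).filter
        (IsoOn C3 T),
        ((cycSet T).filter
          (fun t : Fin n × Fin n × Fin n => ({t.1, t.2.1, t.2.2} : Finset (Fin n)) = A)).card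
          = 3 := by
      intro A hA
      simp only [Finset.mem_filter, Finset.mem_powersetCard] at hA
      obtain ⟨⟨-, hcard⟩, f, hinj, himg, hrel⟩ := hA
      set a := f 0 with ha
      set b := f 1 with hb
      set c := f 2 with hc
      have h1 : T.rel a b = true := by
        have := hrel 0 1; rw [hC301] at this; exact this.symm
      have h2 : T.rel b c = true := by
        have := hrel 1 2; rw [hC312] at this; exact this.symm
      have h3 : T.rel c a = true := by
        have := hrel 2 0; rw [hC320] at this; exact this.symm
      have hab : a ≠ b := rel_ne T h1
      have hbc : b ≠ c := rel_ne T h2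
      have hca : c ≠ a := rel_ne T h3
      have hba := rel_rev T h1
      have hcb := rel_rev T h2
      have hac := rel_rev T h3
      have hA' : A = {a, b, c} := by
        rw [← himg]
        ext x
        simp only [Finset.mem_image, Finset.mem_univ, true_and, Finset.mem_insert,
          Finset.mem_singleton]
        constructor
        · rintro ⟨i, rfl⟩
          fin_cases i <;> simp [ha, hb, hc]
        · rintro (rfl | rfl | rfl)
          exacts [⟨0, rfl⟩, ⟨1, rfl⟩, ⟨2, rfl⟩]
      have hset : (cycSet T).filter
          (fun t : Fin n × Fin n × Fin n => ({t.1, t.2.1, t.2.2} : Finset (Fin n)) = A)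
          = {(a, b, c), (b, c, a), (c, a, b)} := by
        ext t
        obtain ⟨x, y, z⟩ := t
        simp only [cycSet, Finset.mem_filter, Finset.mem_univ, true_and, hA',
          Finset.mem_insert, Finset.mem_singleton]
        constructor
        · rintro ⟨⟨r1, r2, r3⟩, hset⟩
          have ht1 : x ∈ ({a, b, c} : Finset (Fin n)) := by
            rw [← hset]; simp
          have ht2 : y ∈ ({a, b, c} : Finset (Fin n)) := by
            rw [← hset]; simp
          have ht3 : z ∈ ({a, b, c} : Finset (Fin n)) := by
            rw [← hset]; simp
          simp only [Finset.mem_insert, Finset.mem_singleton] at ht1 ht2 ht3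
          rcases ht1 with rfl | rfl | rfl <;> rcases ht2 with rfl | rfl | rfl <;>
            rcases ht3 with rfl | rfl | rfl <;>
            simp_all [T.irrefl, Prod.ext_iff]
        · have hins : ∀ p q r : Fin n, ({p, q, r} : Finset (Fin n)) = {q, r, p} := by
            intro p q r
            ext w
            simp only [Finset.mem_insert, Finset.mem_singleton]
            tauto
          rintro (h' | h' | h') <;> rw [Prod.ext_iff, Prod.ext_iff] at h' <;>
            obtain ⟨rfl, rfl, rfl⟩ := h'
          · exact ⟨⟨h1, h2, h3⟩, rfl⟩
          · exact ⟨⟨h2, h3, h1⟩, (hins a b c).symm⟩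
          · exact ⟨⟨h3, h1, h2⟩, hins c a b⟩
      rw [hset]
      rw [Finset.card_insert_of_notMem, Finset.card_insert_of_notMem,
        Finset.card_singleton]
      · simp [Prod.ext_iff, hbc]
      · simp [Prod.ext_iff, hab, Ne.symm hca]
    rw [Finset.sum_congr rfl hfib]
    rw [Finset.sum_const, smul_eq_mul, mul_comm]
  · intro t ht
    simp only [Finset.mem_coe, cycSet, Finset.mem_filter, Finset.mem_univ, true_and] at ht
    obtain ⟨r1, r2, r3⟩ := ht
    have d12 : t.1 ≠ t.2.1 := rel_ne T r1
    have d23 : t.2.1 ≠ t.2.2 := rel_ne T r2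
    have d31 : t.2.2 ≠ t.1 := rel_ne T r3
    simp only [Finset.mem_coe, Finset.mem_filter, Finset.mem_powersetCard]
    refine ⟨⟨Finset.subset_univ _, ?_⟩, ?_⟩
    · rw [Finset.card_insert_of_notMem, Finset.card_insert_of_notMem,
        Finset.card_singleton]
      · simp [d23]
      · simp [d12, Ne.symm d31]
    · refine ⟨![t.1, t.2.1, t.2.2], ?_, ?_, ?_⟩
      · intro i j hij
        fin_cases i <;> fin_cases j <;>
          first
            | rfl
            | exact absurd hij d12 | exact absurd hij.symm d12
            | exact absurd hij d23 | exact absurd hij.symm d23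
            | exact absurd hij d31 | exact absurd hij.symm d31
      · rw [show (Finset.univ : Finset (Fin 3)) = {0, 1, 2} by decide]
        simp
      · intro i j
        fin_cases i <;> fin_cases j <;>
          first
            | exact (T.irrefl _).symm
            | exact r1.symm | exact r2.symm | exact r3.symm
            | exact (rel_rev T r1).symm | exact (rel_rev T r2).symm
            | exact (rel_rev T r3).symm

end Aux

/-- if `(1/n_j²) · Σ_{arcs (u,v)} |C(u,v)/(n_j-2) - 1/4| → 0`, then
`c₃(T_j)/binomial(n_j,3) → 1/4`. -/
theorem c3_density_of_C_concentration (nn : ℕ → ℕ) (T : ∀ j, Tournament (nn j))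
    (hn : Filter.Tendsto nn Filter.atTop Filter.atTop)
    (h : Filter.Tendsto (fun j => (1 / (nn j : ℝ) ^ 2) * ∑ u, ∑ v, if (T j).rel u v then |(Ccount (T j) u v : ℝ) / ((nn j : ℝ) - 2) - 1 / 4| else 0)
      Filter.atTop (nhds 0)) :
    Filter.Tendsto (fun j => (copyCount C3 (T j) : ℝ) / ((nn j).choose 3 : ℝ))
      Filter.atTop (nhds (1 / 4)) := by
  classical
  have hN : Filter.Tendsto (fun j => (nn j : ℝ)) Filter.atTop Filter.atTop :=
    (tendsto_natCast_atTop_atTop (R := ℝ)).comp hn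
  have hn3 : ∀ᶠ j in Filter.atTop, 3 ≤ nn j := hn.eventually_ge_atTop 3
  -- abbreviations (as plain functions)
  have hbound : ∀ᶠ j in Filter.atTop,
      ‖(∑ u, ∑ v, if (T j).rel u v then (Ccount (T j) u v : ℝ) else 0) /
          ((nn j : ℝ) ^ 2 * ((nn j : ℝ) - 2)) -
        ((nn j : ℝ) - 1) / (8 * (nn j : ℝ))‖ ≤
        (1 / (nn j : ℝ) ^ 2) *
          ∑ u, ∑ v, if (T j).rel u v then
            |(Ccount (T j) u v : ℝ) / ((nn j : ℝ) - 2) - 1 / 4| else 0 := by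
    filter_upwards [hn3] with j hj
    have hjR : (3 : ℝ) ≤ (nn j : ℝ) := by exact_mod_cast hj
    have hN0 : (nn j : ℝ) ≠ 0 := by linarith
    have hN2 : (nn j : ℝ) - 2 ≠ 0 := by linarith
    set N : ℝ := (nn j : ℝ) with hNdef
    set SC : ℝ := ∑ u, ∑ v, if (T j).rel u v then (Ccount (T j) u v : ℝ) else 0 with hSC
    set m : ℝ := ∑ u, ∑ v, if (T j).rel u v then (1 : ℝ) else 0 with hm
    -- value of m
    have hmval : 2 * m = N * (N - 1) := by
      have hnat := two_mul_arcs (T j)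
      have h1j : 1 ≤ nn j := by omega
      have h2 := congrArg (fun x : ℕ => (x : ℝ)) hnat
      push_cast [Nat.cast_sub h1j] at h2
      rw [hNdef, hm]
      exact h2
    -- split the sum
    have hsplit : SC / (N - 2) - m / 4
        = ∑ u, ∑ v, if (T j).rel u v then
            ((Ccount (T j) u v : ℝ) / (N - 2) - 1 / 4) else 0 := by
      have hpt : ∀ u v : Fin (nn j),
          (if (T j).rel u v then ((Ccount (T j) u v : ℝ) / (N - 2) - 1 / 4) else 0)
            = (if (T j).rel u v then (Ccount (T j) u v : ℝ) else 0) / (N - 2)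
              - (if (T j).rel u v then (1 : ℝ) else 0) / 4 := by
        intro u v; split
        · ring
        · simp
      rw [Finset.sum_congr rfl fun u _ => Finset.sum_congr rfl fun v _ => hpt u v]
      rw [hSC, hm]
      simp_rw [Finset.sum_sub_distrib, Finset.sum_div]
    have habs : |SC / (N - 2) - m / 4| ≤
        ∑ u, ∑ v, if (T j).rel u v then
          |(Ccount (T j) u v : ℝ) / (N - 2) - 1 / 4| else 0 := by
      rw [hsplit]
      refine (Finset.abs_sum_le_sum_abs _ _).trans (Finset.sum_le_sum fun u _ => ?_)
      refine (Finset.abs_sum_le_sum_abs _ _).trans (Finset.sum_le_sum fun v _ => ?_)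
      split <;> simp
    have halg : SC / (N ^ 2 * (N - 2)) - (N - 1) / (8 * N)
        = (SC / (N - 2) - m / 4) / N ^ 2 := by
      have hm4 : m = N * (N - 1) / 2 := by linarith
      rw [hm4]
      field_simp
      ring
    rw [Real.norm_eq_abs, halg, abs_div, abs_of_nonneg (by positivity : (0:ℝ) ≤ N ^ 2),
      div_eq_mul_inv, mul_comm]
    rw [one_div]
    refine mul_le_mul_of_nonneg_left habs (by positivity)
  -- the normalized cyclic-triple sum tends to 1/8
  have hgl : Filter.Tendsto (fun j =>
      (∑ u, ∑ v, if (T j).rel u v then (Ccount (T j) u v : ℝ) else 0) /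
        ((nn j : ℝ) ^ 2 * ((nn j : ℝ) - 2))) Filter.atTop (nhds (1 / 8)) := by
    have he : Filter.Tendsto (fun j =>
        (∑ u, ∑ v, if (T j).rel u v then (Ccount (T j) u v : ℝ) else 0) /
          ((nn j : ℝ) ^ 2 * ((nn j : ℝ) - 2)) -
          ((nn j : ℝ) - 1) / (8 * (nn j : ℝ))) Filter.atTop (nhds 0) :=
      squeeze_zero_norm' hbound h
    have hinv : Filter.Tendsto (fun j => 1 / (8 * (nn j : ℝ))) Filter.atTop (nhds 0) := by
      simp only [one_div]
      exact tendsto_inv_atTop_zero.comp (hN.const_mul_atTop (by norm_num))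
    have hlim2 : Filter.Tendsto (fun j => ((nn j : ℝ) - 1) / (8 * (nn j : ℝ)))
        Filter.atTop (nhds (1 / 8)) := by
      have : Filter.Tendsto (fun j => 1 / 8 - 1 / (8 * (nn j : ℝ)))
          Filter.atTop (nhds (1 / 8 - 0)) := tendsto_const_nhds.sub hinv
      rw [sub_zero] at this
      refine this.congr' ?_
      filter_upwards [hn3] with j hj
      have hjR : (3 : ℝ) ≤ (nn j : ℝ) := by exact_mod_cast hj
      have hN0 : (nn j : ℝ) ≠ 0 := by linarith
      field_simp
      try ring
    have := he.add hlim2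
    rw [zero_add] at this
    exact this.congr fun j => by ring
  -- the prefactor tends to 2
  have hcoef : Filter.Tendsto (fun j => 2 * (nn j : ℝ) / ((nn j : ℝ) - 1))
      Filter.atTop (nhds 2) := by
    have hsub : Filter.Tendsto (fun j => (nn j : ℝ) - 1) Filter.atTop Filter.atTop :=
      Filter.tendsto_atTop_add_const_right _ (-1) hN
    have hinv : Filter.Tendsto (fun j => 2 / ((nn j : ℝ) - 1)) Filter.atTop (nhds 0) := by
      simp only [div_eq_mul_inv]
      have := (tendsto_inv_atTop_zero.comp hsub).const_mul (2 : ℝ)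
      rw [mul_zero] at this
      exact this
    have : Filter.Tendsto (fun j => 2 + 2 / ((nn j : ℝ) - 1)) Filter.atTop (nhds (2 + 0)) :=
      tendsto_const_nhds.add hinv
    rw [add_zero] at this
    refine this.congr' ?_
    filter_upwards [hn3] with j hj
    have hjR : (3 : ℝ) ≤ (nn j : ℝ) := by exact_mod_cast hj
    have h1 : (nn j : ℝ) - 1 ≠ 0 := by linarith
    field_simp
    try ring
  -- eventual identity between the target and the product
  have hev : (fun j => (2 * (nn j : ℝ) / ((nn j : ℝ) - 1)) *
        ((∑ u, ∑ v, if (T j).rel u v then (Ccount (T j) u v : ℝ) else 0) /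
          ((nn j : ℝ) ^ 2 * ((nn j : ℝ) - 2))))
      =ᶠ[Filter.atTop] fun j => (copyCount C3 (T j) : ℝ) / ((nn j).choose 3 : ℝ) := by
    filter_upwards [hn3] with j hj
    have hjR : (3 : ℝ) ≤ (nn j : ℝ) := by exact_mod_cast hj
    have hN0 : (nn j : ℝ) ≠ 0 := by linarith
    have h1 : (nn j : ℝ) - 1 ≠ 0 := by linarith
    have h2 : (nn j : ℝ) - 2 ≠ 0 := by linarith
    have hcopy : 3 * (copyCount C3 (T j) : ℝ)
        = ∑ u, ∑ v, if (T j).rel u v then (Ccount (T j) u v : ℝ) else 0 := by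
      have hnat := (sum_C_eq (T j)).symm.trans rfl
      have hnat2 : (∑ u, ∑ v, if (T j).rel u v then Ccount (T j) u v else 0)
          = 3 * copyCount C3 (T j) := (sum_C_eq (T j)).trans (card_cycSet (T j))
      have hcast : ((∑ u, ∑ v, if (T j).rel u v then Ccount (T j) u v else 0 : ℕ) : ℝ)
          = ∑ u, ∑ v, if (T j).rel u v then (Ccount (T j) u v : ℝ) else 0 := by
        push_cast; rfl
      rw [← hcast, hnat2]
      push_cast
      ring
    have hchoose : ((nn j).choose 3 : ℝ)
        = (nn j : ℝ) * ((nn j : ℝ) - 1) * ((nn j : ℝ) - 2) / 6 := by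
      have hd : (nn j).descFactorial 3 = nn j * (nn j - 1) * (nn j - 2) := by
        simp [Nat.descFactorial]
        ring
      have h6 : 6 * (nn j).choose 3 = nn j * (nn j - 1) * (nn j - 2) := by
        rw [← hd, Nat.descFactorial_eq_factorial_mul_choose]
        norm_num [Nat.factorial]
      have h1j : 1 ≤ nn j := by omega
      have h2j : 2 ≤ nn j := by omega
      have := congrArg (fun x : ℕ => (x : ℝ)) h6
      push_cast [Nat.cast_sub h1j, Nat.cast_sub h2j] at this
      linarith
    rw [hchoose, ← hcopy]
    field_simp
    ring
  have hfinal := hcoef.mul hgl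
  rw [show (2 : ℝ) * (1 / 8) = 1 / 4 by norm_num] at hfinal
  exact hfinal.congr' hev
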